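/- arXiv:2506.12595 — 2 statements merged into one kernel-verified Lean document; each statement's English description precedes it below -/
import Mathlib

section
/- Let Ext : ({0,1}^n)³ → {0,1}^m be a three-source extractor for min-entropy k with error ε that is leakage-resilient against NOF protocols with μ ≥ 1 bits of communication among 3 parties. Define Ext' : ({0,1}^n)^N → {0,1}^m for N ≥ 3 by Ext'(x₁,...,x_N) = XOR over all triples {i,j,l} ⊆ [N] of Ext(x_i, x_j, x_l). If additionally the leakage resilience of Ext holds with the stronger guarantee that (Ext(X), Π(X)) is ε-close to (U_m, Π(X)) for leakage Π of length μ ≥ m·binom(N,3), then Ext' is an extractor for (N, 3, n, k)-adversarial sources with error ε. -/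
open Finset

structure FDist (α : Type) [Fintype α] where
  pmf : α → ℝ
  nonneg : ∀ a, 0 ≤ pmf a
  sum_one : ∑ a, pmf a = 1

namespace FDist

variable {α β : Type} [Fintype α] [Fintype β]

noncomputable def map [DecidableEq β] (f : α → β) (P : FDist α) : FDist β where
  pmf b := ∑ a ∈ Finset.univ.filter (fun a => f a = b), P.pmf a
  nonneg _ := Finset.sum_nonneg fun a _ => P.nonneg a
  sum_one := by
    rw [← P.sum_one]
    exact Finset.sum_fiberwise_of_maps_to (fun a _ => Finset.mem_univ (f a)) _

noncomputable def uniform (α : Type) [Fintype α] [Nonempty α] : FDist α where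
  pmf _ := (Fintype.card α : ℝ)⁻¹
  nonneg _ := by positivity
  sum_one := by
    rw [Finset.sum_const, Finset.card_univ, nsmul_eq_mul,
      mul_inv_cancel₀ (Nat.cast_ne_zero.mpr Fintype.card_ne_zero)]

noncomputable def prod (P : FDist α) (Q : FDist β) : FDist (α × β) where
  pmf p := P.pmf p.1 * Q.pmf p.2
  nonneg p := mul_nonneg (P.nonneg _) (Q.nonneg _)
  sum_one := by
    rw [Fintype.sum_prod_type]
    simp_rw [← Finset.mul_sum, Q.sum_one, mul_one, P.sum_one]

noncomputable def pi {N : ℕ} {A : Fin N → Type} [∀ i, Fintype (A i)]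
    (P : ∀ i, FDist (A i)) : FDist (∀ i, A i) where
  pmf x := ∏ i, (P i).pmf (x i)
  nonneg x := Finset.prod_nonneg fun i _ => (P i).nonneg _
  sum_one := by
    classical
    rw [← Fintype.piFinset_univ, ← Finset.prod_univ_sum]
    exact Finset.prod_eq_one fun i _ => (P i).sum_one

noncomputable def sd (P Q : FDist α) : ℝ := (∑ a, |P.pmf a - Q.pmf a|) / 2

def minEntropyGe (P : FDist α) (k : ℝ) : Prop := ∀ a, P.pmf a ≤ (2:ℝ) ^ (-k)

def prob (P : FDist α) (S : Finset α) : ℝ := ∑ a ∈ S, P.pmf a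

end FDist


theorem fdist_ext {α : Type} [Fintype α] {P Q : FDist α} (h : ∀ a, P.pmf a = Q.pmf a) :
    P = Q := by
  cases P; cases Q; congr 1; exact funext h

theorem fdist_map_pmf {α β : Type} [Fintype α] [Fintype β] [DecidableEq β]
    (f : α → β) (P : FDist α) (b : β) :
    (FDist.map f P).pmf b = ∑ a, if f a = b then P.pmf a else 0 := by
  simp [FDist.map, Finset.sum_filter]

theorem fdist_map_map {α β γ : Type} [Fintype α] [Fintype β] [Fintype γ]
    [DecidableEq β] [DecidableEq γ] (f : α → β) (g : β → γ) (P : FDist α) :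
    FDist.map g (FDist.map f P) = FDist.map (fun a => g (f a)) P := by
  apply fdist_ext
  intro c
  rw [fdist_map_pmf]
  simp_rw [fdist_map_pmf]
  have h1 : ∀ b : β, (if g b = c then ∑ a : α, if f a = b then P.pmf a else 0 else 0)
      = ∑ a : α, if g b = c then (if f a = b then P.pmf a else 0) else 0 := by
    intro b; split <;> simp
  simp_rw [h1]
  rw [Finset.sum_comm]
  apply Finset.sum_congr rfl
  intro a _
  have h2 : ∀ b : β, (if g b = c then if f a = b then P.pmf a else 0 else 0)
      = if b = f a then (if g (f a) = c then P.pmf a else 0) else 0 := by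
    intro b
    by_cases hb : b = f a
    · subst hb; split <;> simp_all
    · by_cases hg : g b = c <;> by_cases hf : f a = b <;> simp_all
  simp_rw [h2, Finset.sum_ite_eq' Finset.univ (f a)]
  simp

theorem sd_map_map_le {α β : Type} [Fintype α] [Fintype β] [DecidableEq β]
    (g : α → β) (P Q : FDist α) :
    FDist.sd (FDist.map g P) (FDist.map g Q) ≤ FDist.sd P Q := by
  unfold FDist.sd
  gcongr (?_) / 2
  calc ∑ b, |(FDist.map g P).pmf b - (FDist.map g Q).pmf b|
      ≤ ∑ b, ∑ a ∈ Finset.univ.filter (fun a => g a = b), |P.pmf a - Q.pmf a| := by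
        apply Finset.sum_le_sum
        intro b _
        show |(∑ a ∈ Finset.univ.filter (fun a => g a = b), P.pmf a)
            - ∑ a ∈ Finset.univ.filter (fun a => g a = b), Q.pmf a| ≤ _
        rw [← Finset.sum_sub_distrib]
        exact Finset.abs_sum_le_sum_abs _ _
    _ = ∑ a, |P.pmf a - Q.pmf a| :=
        Finset.sum_fiberwise_of_maps_to (fun a _ => Finset.mem_univ (g a)) _

theorem uniform_translate {G β : Type} [Fintype G] [Nonempty G] [AddGroup G] [DecidableEq G]
    [Fintype β] (h : β → G) (Q : FDist β) :
    FDist.map (fun p : G × β => p.1 + h p.2) ((FDist.uniform G).prod Q) = FDist.uniform G := by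
  apply fdist_ext
  intro b
  rw [fdist_map_pmf]
  show (∑ p : G × β, if p.1 + h p.2 = b then (Fintype.card G : ℝ)⁻¹ * Q.pmf p.2 else 0)
      = (Fintype.card G : ℝ)⁻¹
  rw [Fintype.sum_prod_type_right]
  have h1 : ∀ y : β, (∑ u : G, if u + h y = b then (Fintype.card G : ℝ)⁻¹ * Q.pmf y else 0)
      = (Fintype.card G : ℝ)⁻¹ * Q.pmf y := by
    intro y
    have : ∀ u : G, (if u + h y = b then (Fintype.card G : ℝ)⁻¹ * Q.pmf y else 0)
        = if u = b - h y then (Fintype.card G : ℝ)⁻¹ * Q.pmf y else 0 := by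
      intro u; exact if_congr eq_sub_iff_add_eq.symm rfl rfl
    simp_rw [this, Finset.sum_ite_eq' Finset.univ (b - h y)]
    simp
  simp_rw [h1, ← Finset.mul_sum, Q.sum_one, mul_one]

theorem triple_card {N : ℕ} {a b c : Fin N} (h1 : a < b) (h2 : b < c) :
    ({a, b, c} : Finset (Fin N)).card = 3 := by
  rw [Finset.card_insert_of_notMem, Finset.card_insert_of_notMem, Finset.card_singleton]
  · simp [h2.ne]
  · simp [h1.ne, (h1.trans h2).ne]

theorem sorted_triple_inj {N : ℕ} {p q : Fin N × Fin N × Fin N}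
    (hp : p.1 < p.2.1 ∧ p.2.1 < p.2.2) (hq : q.1 < q.2.1 ∧ q.2.1 < q.2.2)
    (h : ({p.1, p.2.1, p.2.2} : Finset (Fin N)) = {q.1, q.2.1, q.2.2}) : p = q := by
  obtain ⟨a, b, c⟩ := p
  obtain ⟨a', b', c'⟩ := q
  simp only at hp hq ⊢
  have hmem : ∀ x : Fin N, (x = a ∨ x = b ∨ x = c) ↔ (x = a' ∨ x = b' ∨ x = c') := by
    intro x
    have := Finset.ext_iff.mp h x
    simpa using this
  have h1 := (hmem a).mp (Or.inl rfl)
  have h2 := (hmem b).mp (Or.inr (Or.inl rfl))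
  have h3 := (hmem c).mp (Or.inr (Or.inr rfl))
  have h4 := (hmem a').mpr (Or.inl rfl)
  have h5 := (hmem b').mpr (Or.inr (Or.inl rfl))
  have h6 := (hmem c').mpr (Or.inr (Or.inr rfl))
  obtain ⟨hab, hbc⟩ := hp
  obtain ⟨hab', hbc'⟩ := hq
  simp only [Prod.mk.injEq]
  simp only [Fin.ext_iff, Fin.lt_def] at *
  omega

theorem sorted_triple_card_le {N : ℕ} :
    (Finset.univ.filter (fun p : Fin N × Fin N × Fin N => p.1 < p.2.1 ∧ p.2.1 < p.2.2)).card
      ≤ Nat.choose N 3 := by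
  classical
  have := Finset.card_le_card_of_injOn
    (f := fun p : Fin N × Fin N × Fin N => ({p.1, p.2.1, p.2.2} : Finset (Fin N)))
    (s := Finset.univ.filter (fun p : Fin N × Fin N × Fin N => p.1 < p.2.1 ∧ p.2.1 < p.2.2))
    (t := Finset.powersetCard 3 Finset.univ) ?_ ?_
  · simpa [Finset.card_powersetCard] using this
  · intro p hp
    obtain ⟨-, h1, h2⟩ := Finset.mem_filter.mp hp
    rw [Finset.mem_coe, Finset.mem_powersetCard_univ]
    exact triple_card h1 h2
  · intro p hp q hq h
    exact sorted_triple_inj (Finset.mem_filter.mp hp).2 (Finset.mem_filter.mp hq).2 h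

theorem avoid_exists {N : ℕ} {p q : Fin N × Fin N × Fin N}
    (hp : p.1 < p.2.1 ∧ p.2.1 < p.2.2) (hq : q.1 < q.2.1 ∧ q.2.1 < q.2.2)
    (hne : p ≠ q) :
    ∃ t : Fin 3, ![q.1, q.2.1, q.2.2] t ∉ ({p.1, p.2.1, p.2.2} : Finset (Fin N)) := by
  by_contra hcon
  push_neg at hcon
  have hsub : ({q.1, q.2.1, q.2.2} : Finset (Fin N)) ⊆ {p.1, p.2.1, p.2.2} := by
    intro x hx
    simp only [Finset.mem_insert, Finset.mem_singleton] at hx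
    rcases hx with h | h | h
    · subst h; exact hcon 0
    · subst h; exact hcon 1
    · subst h; exact hcon 2
  have heq := Finset.eq_of_subset_of_card_le hsub
    (by rw [triple_card hp.1 hp.2, triple_card hq.1 hq.2])
  exact hne (sorted_triple_inj hq hp heq).symm


section Merge

variable {n N : ℕ}

def mergeF (i j l : Fin N) (z : Fin N → Fin n → ZMod 2) (w : Fin 3 → Fin n → ZMod 2) :
    Fin N → Fin n → ZMod 2 :=
  fun r => if r = i then w 0 else if r = j then w 1 else if r = l then w 2 else z r

variable {z : Fin N → Fin n → ZMod 2} {w : Fin 3 → Fin n → ZMod 2}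

theorem merge_at_i {i j l : Fin N} : mergeF i j l z w i = w 0 := if_pos rfl

theorem merge_at_j {i j l : Fin N} (h : j ≠ i) : mergeF i j l z w j = w 1 := by
  unfold mergeF; rw [if_neg h, if_pos rfl]

theorem merge_at_l {i j l : Fin N} (h1 : l ≠ i) (h2 : l ≠ j) :
    mergeF i j l z w l = w 2 := by
  unfold mergeF; rw [if_neg h1, if_neg h2, if_pos rfl]

theorem merge_at_other {i j l r : Fin N} (h1 : r ≠ i) (h2 : r ≠ j) (h3 : r ≠ l) :
    mergeF i j l z w r = z r := by
  unfold mergeF; rw [if_neg h1, if_neg h2, if_neg h3]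

theorem merge_merge {i j l : Fin N} :
    mergeF i j l (mergeF i j l z w) ![z i, z j, z l] = z := by
  funext r
  by_cases h1 : r = i
  · subst h1; simp [mergeF]
  by_cases h2 : r = j
  · subst h2; simp [mergeF, h1]
  by_cases h3 : r = l
  · subst h3; simp [mergeF, h1, h2]
  · rw [merge_at_other h1 h2 h3, merge_at_other h1 h2 h3]

theorem extract_merge {i j l : Fin N} (hji : j ≠ i) (hli : l ≠ i) (hlj : l ≠ j) :
    ![mergeF i j l z w i, mergeF i j l z w j, mergeF i j l z w l] = w := by
  funext t
  fin_cases t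
  · simpa using merge_at_i
  · simpa using merge_at_j hji
  · simpa using merge_at_l hli hlj

end Merge

theorem weight_swap {n N : ℕ} (X : Fin N → FDist (Fin n → ZMod 2))
    {i j l : Fin N} (hij : i < j) (hjl : j < l)
    (z : Fin N → Fin n → ZMod 2) (w : Fin 3 → Fin n → ZMod 2) :
    (FDist.pi X).pmf (mergeF i j l z w) * (FDist.pi ![X i, X j, X l]).pmf ![z i, z j, z l]
      = (FDist.pi X).pmf z * (FDist.pi ![X i, X j, X l]).pmf w := by
  classical
  have hil : i < l := hij.trans hjl
  have h3 : ∀ u : Fin 3 → Fin n → ZMod 2,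
      (FDist.pi ![X i, X j, X l]).pmf u
        = (X i).pmf (u 0) * ((X j).pmf (u 1) * (X l).pmf (u 2)) := by
    intro u
    show (∏ t, (![X i, X j, X l] t).pmf (u t)) = _
    rw [Fin.prod_univ_three]
    simp [mul_assoc]
  have hsplit : ∀ f : Fin N → ℝ,
      (∏ r, f r) = (f i * (f j * f l)) * ∏ r ∈ ({i, j, l} : Finset (Fin N))ᶜ, f r := by
    intro f
    rw [← Finset.prod_mul_prod_compl ({i, j, l} : Finset (Fin N)) f]
    congr 1
    rw [Finset.prod_insert (by simp [hij.ne, hil.ne]),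
      Finset.prod_insert (by simp [hjl.ne]), Finset.prod_singleton]
  show (∏ r, (X r).pmf (mergeF i j l z w r)) * _ = (∏ r, (X r).pmf (z r)) * _
  rw [hsplit (fun r => (X r).pmf (mergeF i j l z w r)), hsplit (fun r => (X r).pmf (z r)),
    h3, h3]
  have hcompl : (∏ r ∈ ({i, j, l} : Finset (Fin N))ᶜ, (X r).pmf (mergeF i j l z w r))
      = ∏ r ∈ ({i, j, l} : Finset (Fin N))ᶜ, (X r).pmf (z r) := by
    apply Finset.prod_congr rfl
    intro r hr
    simp only [Finset.mem_compl, Finset.mem_insert, Finset.mem_singleton, not_or] at hr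
    rw [merge_at_other hr.1 hr.2.1 hr.2.2]
  rw [hcompl, merge_at_i, merge_at_j hij.ne', merge_at_l hil.ne' hjl.ne']
  simp only [Matrix.cons_val_zero, Matrix.cons_val_one, Matrix.head_cons]
  have : (![z i, z j, z l] : Fin 3 → Fin n → ZMod 2) 2 = z l := by simp
  rw [this]
  ring

def encF {α : Type} {m c mu : ℕ} (hbound : c * m ≤ mu) (e : α ≃ Fin c) (q : α × Fin m) :
    Fin mu :=
  ⟨(e q.1).1 * m + q.2.1, by
    have h1 : (e q.1).1 + 1 ≤ c := (e q.1).2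
    have h2 : q.2.1 < m := q.2.2
    calc (e q.1).1 * m + q.2.1 < ((e q.1).1 + 1) * m := by rw [add_one_mul]; omega
    _ ≤ c * m := Nat.mul_le_mul_right m h1
    _ ≤ mu := hbound⟩

theorem encF_inj {α : Type} {m c mu : ℕ} (hbound : c * m ≤ mu) (e : α ≃ Fin c) :
    Function.Injective (encF hbound e) := by
  intro q1 q2 h
  have h2 : q1.2.1 < m := q1.2.2
  have h2' : q2.2.1 < m := q2.2.2
  have hm : 0 < m := lt_of_le_of_lt (Nat.zero_le _) h2
  have hval : (e q1.1).1 * m + q1.2.1 = (e q2.1).1 * m + q2.2.1 := congrArg Fin.val h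
  have d : ∀ a b : ℕ, b < m → (a * m + b) / m = a := by
    intro a b hb
    rw [mul_comm, Nat.mul_add_div hm, Nat.div_eq_of_lt hb]; omega
  have e1 := d (e q1.1).1 q1.2.1 h2
  have e2 := d (e q2.1).1 q2.2.1 h2'
  have hq : (e q1.1).1 = (e q2.1).1 := by rw [← e1, ← e2, hval]
  have h11 : q1.1 = q2.1 := e.injective (Fin.ext hq)
  rw [hq] at hval
  have h22 : q1.2 = q2.2 := Fin.ext (by omega)
  exact Prod.ext h11 h22

/-- An NOF protocol: each transcript bit `t` is written by some party `party t`,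
and depends only on the inputs on the other parties' foreheads and the previous bits. -/
def IsNOFProtocol {n N mu : ℕ}
    (Pi : (Fin N → (Fin n → ZMod 2)) → (Fin mu → ZMod 2)) : Prop :=
  ∃ party : Fin mu → Fin N,
    ∀ (t : Fin mu) (x y : Fin N → (Fin n → ZMod 2)),
      (∀ i, i ≠ party t → x i = y i) →
      (∀ s : Fin mu, s < t → Pi x s = Pi y s) →
      Pi x t = Pi y t

/-- A leakage-resilient extractor against NOF protocols with `mu` bits of
communication, min-entropy `k` and error `ε`. -/
def IsLRE (n N m mu : ℕ) (k ε : ℝ)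
    (Ext : (Fin N → (Fin n → ZMod 2)) → (Fin m → ZMod 2)) : Prop :=
  ∀ Pi : (Fin N → (Fin n → ZMod 2)) → (Fin mu → ZMod 2), IsNOFProtocol Pi →
    ∀ X : Fin N → FDist (Fin n → ZMod 2), (∀ i, (X i).minEntropyGe k) →
      FDist.sd (FDist.map (fun x => (Ext x, Pi x)) (FDist.pi X))
        (FDist.map (fun p => (p.1, Pi p.2))
          ((FDist.uniform (Fin m → ZMod 2)).prod (FDist.pi X))) ≤ ε

theorem key_lemma {n N m mu : ℕ} {k ε : ℝ} (hmu' : m * Nat.choose N 3 ≤ mu)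
    (Ext : (Fin 3 → (Fin n → ZMod 2)) → (Fin m → ZMod 2))
    (hLRE : IsLRE n 3 m mu k ε Ext)
    (X : Fin N → FDist (Fin n → ZMod 2))
    {i j l : Fin N} (hij : i < j) (hjl : j < l)
    (hi : (X i).minEntropyGe k) (hj : (X j).minEntropyGe k) (hl : (X l).minEntropyGe k)
    (z : Fin N → Fin n → ZMod 2) :
    FDist.sd
      (FDist.map (fun w => ∑ p ∈ Finset.univ.filter
          (fun p : Fin N × Fin N × Fin N => p.1 < p.2.1 ∧ p.2.1 < p.2.2),
        Ext ![mergeF i j l z w p.1, mergeF i j l z w p.2.1, mergeF i j l z w p.2.2])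
        (FDist.pi ![X i, X j, X l]))
      (FDist.uniform (Fin m → ZMod 2)) ≤ ε := by
  classical
  have hil : i < l := hij.trans hjl
  set S : Finset (Fin N × Fin N × Fin N) :=
    Finset.univ.filter (fun p => p.1 < p.2.1 ∧ p.2.1 < p.2.2) with hS
  have hp₀ : (i, (j, l)) ∈ S := by simp [hS, hij, hjl]
  set S' := S.erase (i, (j, l)) with hS'
  have hcard : S'.card * m ≤ mu := by
    have h1 : S'.card ≤ Nat.choose N 3 := by
      refine le_trans (Finset.card_le_card (Finset.erase_subset _ _)) ?_
      rw [hS]; exact sorted_triple_card_le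
    calc S'.card * m ≤ Nat.choose N 3 * m := Nat.mul_le_mul_right m h1
    _ = m * Nat.choose N 3 := mul_comm _ _
    _ ≤ mu := hmu'
  set eS := S'.equivFin with heS
  set enc : {x // x ∈ S'} × Fin m → Fin mu := encF hcard eS with henc
  have hencinj : Function.Injective enc := encF_inj hcard eS
  have hsorted : ∀ p : {x // x ∈ S'}, p.1.1 < p.1.2.1 ∧ p.1.2.1 < p.1.2.2 := by
    intro p
    have h := Finset.mem_of_mem_erase p.2
    rw [hS] at h
    exact (Finset.mem_filter.mp h).2
  have hnep : ∀ p : {x // x ∈ S'}, p.1 ≠ (i, (j, l)) := fun p => (Finset.mem_erase.mp p.2).1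
  have hAV : ∀ p : {x // x ∈ S'}, ∃ t : Fin 3,
      ![i, j, l] t ∉ ({p.1.1, p.1.2.1, p.1.2.2} : Finset (Fin N)) :=
    fun p => avoid_exists (hsorted p) ⟨hij, hjl⟩ (hnep p)
  set av : {x // x ∈ S'} → Fin 3 := fun p => (hAV p).choose with hav
  have hav_spec : ∀ p : {x // x ∈ S'},
      ![i, j, l] (av p) ∉ ({p.1.1, p.1.2.1, p.1.2.2} : Finset (Fin N)) :=
    fun p => (hAV p).choose_spec
  set Pi : (Fin 3 → (Fin n → ZMod 2)) → Fin mu → ZMod 2 := fun w t =>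
    ∑ q : {x // x ∈ S'} × Fin m, if enc q = t then
      Ext ![mergeF i j l z w q.1.1.1, mergeF i j l z w q.1.1.2.1,
        mergeF i j l z w q.1.1.2.2] q.2 else 0 with hPi
  have hNOF : IsNOFProtocol Pi := by
    refine ⟨fun t => if h : ∃ q : {x // x ∈ S'} × Fin m, enc q = t then av h.choose.1 else 0, ?_⟩
    intro t w w' hagree _
    simp only [hPi]
    apply Finset.sum_congr rfl
    intro q _
    by_cases hq : enc q = t
    · rw [if_pos hq, if_pos hq]
      have hex : ∃ q' : {x // x ∈ S'} × Fin m, enc q' = t := ⟨q, hq⟩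
      have hqq : hex.choose = q := hencinj (hex.choose_spec.trans hq.symm)
      have hparty : (if h : ∃ q' : {x // x ∈ S'} × Fin m, enc q' = t then av h.choose.1 else 0)
          = av q.1 := by rw [dif_pos hex, hqq]
      have hcoord : ∀ x : Fin N, x ∈ ({q.1.1.1, q.1.1.2.1, q.1.1.2.2} : Finset (Fin N)) →
          mergeF i j l z w x = mergeF i j l z w' x := by
        intro x hx
        have key0 : ∀ s : Fin 3, ![i, j, l] s = x → w s = w' s := by
          intro s hs
          apply hagree s
          simp only [hparty]
          intro hcon
          apply hav_spec q.1
          rw [hcon] at hs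
          rw [hs]
          exact hx
        unfold mergeF
        split_ifs with h1 h2 h3
        · exact key0 0 (by simp [h1])
        · exact key0 1 (by simp [h2])
        · exact key0 2 (by simp [h3])
        · rfl
      have hv : (![mergeF i j l z w q.1.1.1, mergeF i j l z w q.1.1.2.1,
            mergeF i j l z w q.1.1.2.2] : Fin 3 → Fin n → ZMod 2)
          = ![mergeF i j l z w' q.1.1.1, mergeF i j l z w' q.1.1.2.1,
            mergeF i j l z w' q.1.1.2.2] := by
        rw [hcoord _ (by simp), hcoord _ (by simp), hcoord _ (by simp)]
      rw [hv]
    · rw [if_neg hq, if_neg hq]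
  have hW : ∀ t : Fin 3, (![X i, X j, X l] t).minEntropyGe k := by
    intro t; fin_cases t
    · simpa using hi
    · simpa using hj
    · simpa using hl
  have hsd := hLRE Pi hNOF ![X i, X j, X l] hW
  set dec : (Fin mu → ZMod 2) → Fin m → ZMod 2 :=
    fun π r => ∑ p : {x // x ∈ S'}, π (enc (p, r)) with hdec
  set g : (Fin m → ZMod 2) × (Fin mu → ZMod 2) → Fin m → ZMod 2 :=
    fun pr => pr.1 + dec pr.2 with hg
  have hA : FDist.map g (FDist.map (fun w => (Ext w, Pi w)) (FDist.pi ![X i, X j, X l]))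
      = FDist.map (fun w => ∑ p ∈ S,
          Ext ![mergeF i j l z w p.1, mergeF i j l z w p.2.1, mergeF i j l z w p.2.2])
        (FDist.pi ![X i, X j, X l]) := by
    rw [fdist_map_map]
    congr 1
    funext w
    show Ext w + dec (Pi w) = _
    have hdecPi : dec (Pi w) = ∑ p ∈ S',
        Ext ![mergeF i j l z w p.1, mergeF i j l z w p.2.1, mergeF i j l z w p.2.2] := by
      funext r
      rw [Finset.sum_apply]
      show (∑ p : {x // x ∈ S'}, Pi w (enc (p, r))) = _
      have hcollapse : ∀ p : {x // x ∈ S'}, Pi w (enc (p, r))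
          = Ext ![mergeF i j l z w p.1.1, mergeF i j l z w p.1.2.1,
              mergeF i j l z w p.1.2.2] r := by
        intro p
        simp only [hPi]
        simp_rw [hencinj.eq_iff]
        simp
      simp_rw [hcollapse]
      exact Finset.sum_coe_sort S' (fun c => Ext ![mergeF i j l z w c.1,
        mergeF i j l z w c.2.1, mergeF i j l z w c.2.2] r)
    rw [hdecPi, ← Finset.add_sum_erase S _ hp₀]
    congr 1
    rw [extract_merge hij.ne' hil.ne' hjl.ne']
  have hB : FDist.map g (FDist.map (fun pr => (pr.1, Pi pr.2))
      ((FDist.uniform (Fin m → ZMod 2)).prod (FDist.pi ![X i, X j, X l])))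
      = FDist.uniform (Fin m → ZMod 2) := by
    rw [fdist_map_map]
    exact uniform_translate (fun w => dec (Pi w)) _
  rw [← hA, ← hB]
  exact le_trans (sd_map_map_le g _ _) hsd

theorem main_aux {n N m mu : ℕ} {k ε : ℝ} (hmu' : m * Nat.choose N 3 ≤ mu)
    (Ext : (Fin 3 → (Fin n → ZMod 2)) → (Fin m → ZMod 2))
    (hLRE : IsLRE n 3 m mu k ε Ext)
    (X : Fin N → FDist (Fin n → ZMod 2))
    {i j l : Fin N} (hij : i < j) (hjl : j < l)
    (hi : (X i).minEntropyGe k) (hj : (X j).minEntropyGe k) (hl : (X l).minEntropyGe k) :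
    FDist.sd
      (FDist.map (fun x => ∑ p ∈ Finset.univ.filter
          (fun p : Fin N × Fin N × Fin N => p.1 < p.2.1 ∧ p.2.1 < p.2.2),
        Ext ![x p.1, x p.2.1, x p.2.2]) (FDist.pi X))
      (FDist.uniform (Fin m → ZMod 2)) ≤ ε := by
  classical
  have hil := hij.trans hjl
  set S : Finset (Fin N × Fin N × Fin N) :=
    Finset.univ.filter (fun p => p.1 < p.2.1 ∧ p.2.1 < p.2.2) with hS
  set W : Fin 3 → FDist (Fin n → ZMod 2) := ![X i, X j, X l] with hWdef
  set U := FDist.uniform (Fin m → ZMod 2) with hU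
  set Pz : (Fin N → Fin n → ZMod 2) → FDist (Fin m → ZMod 2) := fun z =>
    FDist.map (fun w => ∑ p ∈ S,
      Ext ![mergeF i j l z w p.1, mergeF i j l z w p.2.1, mergeF i j l z w p.2.2])
      (FDist.pi W) with hPz
  have key : ∀ z, FDist.sd (Pz z) U ≤ ε := fun z =>
    key_lemma hmu' Ext hLRE X hij hjl hi hj hl z
  set M := FDist.map (fun x => ∑ p ∈ S, Ext ![x p.1, x p.2.1, x p.2.2]) (FDist.pi X) with hM
  have mix : ∀ b, M.pmf b = ∑ z, (FDist.pi X).pmf z * (Pz z).pmf b := by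
    intro b
    rw [hM, fdist_map_pmf]
    have h1 : ∑ z, (FDist.pi X).pmf z * (Pz z).pmf b
        = ∑ zw : (Fin N → Fin n → ZMod 2) × (Fin 3 → Fin n → ZMod 2),
            (FDist.pi X).pmf zw.1 * (if (∑ p ∈ S, Ext ![mergeF i j l zw.1 zw.2 p.1,
              mergeF i j l zw.1 zw.2 p.2.1, mergeF i j l zw.1 zw.2 p.2.2]) = b
              then (FDist.pi W).pmf zw.2 else 0) := by
      rw [Fintype.sum_prod_type]
      apply Finset.sum_congr rfl
      intro z _
      simp only [hPz]
      rw [fdist_map_pmf, Finset.mul_sum]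
    set Φ : (Fin N → Fin n → ZMod 2) × (Fin 3 → Fin n → ZMod 2) →
        (Fin N → Fin n → ZMod 2) × (Fin 3 → Fin n → ZMod 2) :=
      fun zw => (mergeF i j l zw.1 zw.2, ![zw.1 i, zw.1 j, zw.1 l]) with hΦ
    have hinv : Function.Involutive Φ := by
      intro zw
      simp only [hΦ]
      refine Prod.ext ?_ ?_
      · exact merge_merge
      · exact extract_merge hij.ne' hil.ne' hjl.ne'
    have h2 := Equiv.sum_comp hinv.toPerm
      (fun zw : (Fin N → Fin n → ZMod 2) × (Fin 3 → Fin n → ZMod 2) =>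
        (FDist.pi X).pmf zw.1 * (if (∑ p ∈ S, Ext ![mergeF i j l zw.1 zw.2 p.1,
          mergeF i j l zw.1 zw.2 p.2.1, mergeF i j l zw.1 zw.2 p.2.2]) = b
          then (FDist.pi W).pmf zw.2 else 0))
    have h3 : ∀ zw : (Fin N → Fin n → ZMod 2) × (Fin 3 → Fin n → ZMod 2),
        (FDist.pi X).pmf (Φ zw).1 * (if (∑ p ∈ S, Ext ![mergeF i j l (Φ zw).1 (Φ zw).2 p.1,
          mergeF i j l (Φ zw).1 (Φ zw).2 p.2.1, mergeF i j l (Φ zw).1 (Φ zw).2 p.2.2]) = b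
          then (FDist.pi W).pmf (Φ zw).2 else 0)
        = (if (∑ p ∈ S, Ext ![zw.1 p.1, zw.1 p.2.1, zw.1 p.2.2]) = b then 1 else 0)
            * ((FDist.pi X).pmf zw.1 * (FDist.pi W).pmf zw.2) := by
      intro zw
      simp only [hΦ]
      rw [merge_merge]
      by_cases hb : (∑ p ∈ S, Ext ![zw.1 p.1, zw.1 p.2.1, zw.1 p.2.2]) = b
      · rw [if_pos hb, if_pos hb, one_mul]
        exact weight_swap X hij hjl zw.1 zw.2
      · rw [if_neg hb, if_neg hb, mul_zero, zero_mul]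
    rw [h1, ← h2]
    simp only [Function.Involutive.coe_toPerm]
    refine Eq.trans ?_ (Finset.sum_congr rfl fun zw _ => h3 zw).symm
    rw [Fintype.sum_prod_type]
    apply Finset.sum_congr rfl
    intro x _
    have : ∀ w : Fin 3 → Fin n → ZMod 2,
        (if (∑ p ∈ S, Ext ![x p.1, x p.2.1, x p.2.2]) = b then 1 else 0)
          * ((FDist.pi X).pmf x * (FDist.pi W).pmf w)
        = ((if (∑ p ∈ S, Ext ![x p.1, x p.2.1, x p.2.2]) = b then (FDist.pi X).pmf x else 0))
          * (FDist.pi W).pmf w := by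
      intro w
      split_ifs <;> ring
    simp_rw [this]
    rw [← Finset.mul_sum, (FDist.pi W).sum_one, mul_one]
  have hnn : ∀ z, 0 ≤ (FDist.pi X).pmf z := (FDist.pi X).nonneg
  have hsum1 : ∑ z, (FDist.pi X).pmf z = 1 := (FDist.pi X).sum_one
  have hbnd : ∀ b, |M.pmf b - U.pmf b| ≤ ∑ z, (FDist.pi X).pmf z * |(Pz z).pmf b - U.pmf b| := by
    intro b
    rw [mix b]
    have hU1 : (∑ z, (FDist.pi X).pmf z * (Pz z).pmf b) - U.pmf b
        = ∑ z, (FDist.pi X).pmf z * ((Pz z).pmf b - U.pmf b) := by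
      simp_rw [mul_sub]
      rw [Finset.sum_sub_distrib, ← Finset.sum_mul, hsum1, one_mul]
    rw [hU1]
    refine le_trans (Finset.abs_sum_le_sum_abs _ _) ?_
    apply Finset.sum_le_sum
    intro z _
    rw [abs_mul, abs_of_nonneg (hnn z)]
  show FDist.sd M U ≤ ε
  calc FDist.sd M U = (∑ b, |M.pmf b - U.pmf b|) / 2 := rfl
    _ ≤ (∑ b, ∑ z, (FDist.pi X).pmf z * |(Pz z).pmf b - U.pmf b|) / 2 := by
        gcongr with b
        · exact hbnd b
    _ = ∑ z, (FDist.pi X).pmf z * FDist.sd (Pz z) U := by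
        rw [Finset.sum_comm, Finset.sum_div]
        apply Finset.sum_congr rfl
        intro z _
        show (∑ b, (FDist.pi X).pmf z * |(Pz z).pmf b - U.pmf b|) / 2 = _
        rw [← Finset.mul_sum]
        unfold FDist.sd
        ring
    _ ≤ ∑ z, (FDist.pi X).pmf z * ε :=
        Finset.sum_le_sum fun z _ => mul_le_mul_of_nonneg_left (key z) (hnn z)
    _ = ε := by rw [← Finset.sum_mul, hsum1, one_mul]


theorem stmt15 (n N m mu : ℕ) (k ε : ℝ) (hN : 3 ≤ N) (hmu : 1 ≤ mu)
    (hmu' : m * Nat.choose N 3 ≤ mu)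
    (Ext : (Fin 3 → (Fin n → ZMod 2)) → (Fin m → ZMod 2))
    (hext : ∀ Y : Fin 3 → FDist (Fin n → ZMod 2), (∀ i, (Y i).minEntropyGe k) →
      FDist.sd (FDist.map Ext (FDist.pi Y)) (FDist.uniform (Fin m → ZMod 2)) ≤ ε)
    (hLRE : IsLRE n 3 m mu k ε Ext)
    (X : Fin N → FDist (Fin n → ZMod 2))
    (i j l : Fin N) (hij : i ≠ j) (hil : i ≠ l) (hjl : j ≠ l)
    (hi : (X i).minEntropyGe k) (hj : (X j).minEntropyGe k)
    (hl : (X l).minEntropyGe k) :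
    FDist.sd
      (FDist.map
        (fun x => ∑ p ∈ Finset.univ.filter
            (fun p : Fin N × Fin N × Fin N => p.1 < p.2.1 ∧ p.2.1 < p.2.2),
          Ext ![x p.1, x p.2.1, x p.2.2])
        (FDist.pi X))
      (FDist.uniform (Fin m → ZMod 2)) ≤ ε := by
  rcases hij.lt_or_gt with h1 | h1
  · rcases hjl.lt_or_gt with h2 | h2
    · exact main_aux hmu' Ext hLRE X h1 h2 hi hj hl
    · rcases hil.lt_or_gt with h3 | h3
      · exact main_aux hmu' Ext hLRE X h3 h2 hi hl hj
      · exact main_aux hmu' Ext hLRE X h3 h1 hl hi hj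
  · rcases hil.lt_or_gt with h2 | h2
    · exact main_aux hmu' Ext hLRE X h1 h2 hj hi hl
    · rcases hjl.lt_or_gt with h3 | h3
      · exact main_aux hmu' Ext hLRE X h3 h2 hj hl hi
      · exact main_aux hmu' Ext hLRE X h3 h1 hl hj hi
end

section
/- The inner-product function is a two-source extractor: for IP : F₂^n × F₂^n → F₂ given by IP(x,y) = ⟨x,y⟩ mod 2, and any two independent sources X, Y on F₂^n with H_∞(X) ≥ k₁ and H_∞(Y) ≥ k₂ satisfying k₁ + k₂ ≥ n + 2 + 2log₂(1/ε), the output IP(X,Y) is ε-close to a uniform bit. -/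
open Finset

section IPHelpers

noncomputable def ch (b : ZMod 2) : ℝ := if b = 0 then 1 else -1

lemma sum_zmod2 (f : ZMod 2 → ℝ) : ∑ b, f b = f 0 + f 1 := by
  have h : (Finset.univ : Finset (ZMod 2)) = {0, 1} := by decide
  rw [h, Finset.sum_insert (by decide), Finset.sum_singleton]

set_option linter.unnecessarySeqFocus false in
lemma ch_add (a b : ZMod 2) : ch (a + b) = ch a * ch b := by
  have key : ∀ a b : ZMod 2, (a + b = 0 ↔ (a = 0 ↔ b = 0)) := by decide
  unfold ch; by_cases ha : a = 0 <;> by_cases hb : b = 0 <;> simp [ha, hb, key]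

lemma ch_sum {ι : Type} (s : Finset ι) (f : ι → ZMod 2) :
    ch (∑ i ∈ s, f i) = ∏ i ∈ s, ch (f i) := by
  induction s using Finset.cons_induction with
  | empty => simp [ch]
  | cons a s ha ih => rw [Finset.sum_cons, Finset.prod_cons, ch_add, ih]

lemma zmod2_ne_zero_iff (a : ZMod 2) : ¬ a = 0 ↔ a = 1 := by
  revert a; decide

lemma pi_add_eq_zero {n : ℕ} (y y' : Fin n → ZMod 2) : y + y' = 0 ↔ y' = y := by
  have h : ∀ a b : ZMod 2, a + b = 0 ↔ b = a := by decide
  simp [funext_iff, h]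

lemma sum_ch_ip (n : ℕ) (z : Fin n → ZMod 2) :
    ∑ x : Fin n → ZMod 2, ch (∑ i, x i * z i) = if z = 0 then (2:ℝ)^n else 0 := by
  simp_rw [ch_sum]
  have hps := Finset.prod_univ_sum (fun _ : Fin n => (Finset.univ : Finset (ZMod 2)))
    (fun i b => ch (b * z i))
  rw [Fintype.piFinset_univ] at hps
  rw [← hps]
  have h1 : ∀ w : ZMod 2, ∑ b : ZMod 2, ch (b * w) = if w = 0 then (2:ℝ) else 0 := by
    intro w; rw [sum_zmod2]; by_cases hw : w = 0 <;> simp [ch, hw] <;> norm_num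
  simp_rw [h1]
  by_cases hz : z = 0
  · simp [hz]
  · obtain ⟨i, hi⟩ : ∃ i, z i ≠ 0 := by
      by_contra hc; push_neg at hc; exact hz (funext hc)
    rw [if_neg hz]
    exact Finset.prod_eq_zero (Finset.mem_univ i) (if_neg hi)

noncomputable def ipBias (n : ℕ) (X Y : FDist (Fin n → ZMod 2)) : ℝ :=
  ∑ x, ∑ y, X.pmf x * Y.pmf y * ch (∑ i, x i * y i)

lemma sd_eq_bias (n : ℕ) (X Y : FDist (Fin n → ZMod 2)) :
    FDist.sd (FDist.map (fun p => ∑ i, p.1 i * p.2 i) (X.prod Y))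
      (FDist.uniform (ZMod 2)) = |ipBias n X Y| / 2 := by
  set D := FDist.map (fun p => ∑ i, p.1 i * p.2 i) (X.prod Y) with hDdef
  have hpmf : ∀ b, D.pmf b =
      ∑ p ∈ Finset.univ.filter
        (fun p : (Fin n → ZMod 2) × (Fin n → ZMod 2) => (∑ i, p.1 i * p.2 i) = b),
        X.pmf p.1 * Y.pmf p.2 := fun b => rfl
  have hD01 : D.pmf 0 + D.pmf 1 = 1 := by
    have h := D.sum_one; rwa [sum_zmod2] at h
  have hDdiff : D.pmf 0 - D.pmf 1 = ipBias n X Y := by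
    have hB' : ipBias n X Y = ∑ p : (Fin n → ZMod 2) × (Fin n → ZMod 2),
        X.pmf p.1 * Y.pmf p.2 * ch (∑ i, p.1 i * p.2 i) := by
      rw [Fintype.sum_prod_type]; rfl
    rw [hB', ← Finset.sum_filter_add_sum_filter_not Finset.univ
      (fun p : (Fin n → ZMod 2) × (Fin n → ZMod 2) => (∑ i, p.1 i * p.2 i) = 0)]
    have e0 : ∑ p ∈ Finset.univ.filter
        (fun p : (Fin n → ZMod 2) × (Fin n → ZMod 2) => (∑ i, p.1 i * p.2 i) = 0),
        X.pmf p.1 * Y.pmf p.2 * ch (∑ i, p.1 i * p.2 i) = D.pmf 0 := by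
      rw [hpmf 0]
      refine Finset.sum_congr rfl fun p hp => ?_
      have h := (Finset.mem_filter.1 hp).2
      simp [ch, h]
    have e1 : ∑ p ∈ Finset.univ.filter
        (fun p : (Fin n → ZMod 2) × (Fin n → ZMod 2) => ¬ (∑ i, p.1 i * p.2 i) = 0),
        X.pmf p.1 * Y.pmf p.2 * ch (∑ i, p.1 i * p.2 i) = -(D.pmf 1) := by
      rw [hpmf 1, Finset.filter_congr
          (fun p _ => zmod2_ne_zero_iff (∑ i, p.1 i * p.2 i)),
        ← Finset.sum_neg_distrib]
      refine Finset.sum_congr rfl fun p hp => ?_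
      have h := (Finset.mem_filter.1 hp).2
      simp [ch, h]
    rw [e0, e1]; ring
  unfold FDist.sd
  rw [sum_zmod2]
  have hu : ∀ b : ZMod 2, (FDist.uniform (ZMod 2)).pmf b = (2:ℝ)⁻¹ := by
    intro b
    show ((Fintype.card (ZMod 2) : ℝ))⁻¹ = (2:ℝ)⁻¹
    rw [ZMod.card]; norm_num
  have h0 : D.pmf 0 = (1 + ipBias n X Y)/2 := by linarith
  have h1 : D.pmf 1 = (1 - ipBias n X Y)/2 := by linarith
  rw [hu, hu, h0, h1]
  have e : (1 + ipBias n X Y)/2 - (2:ℝ)⁻¹ = ipBias n X Y/2 := by ring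
  have e' : (1 - ipBias n X Y)/2 - (2:ℝ)⁻¹ = -(ipBias n X Y/2) := by ring
  rw [e, e', abs_neg, abs_div]
  rw [show |(2:ℝ)| = 2 by norm_num]
  ring

end IPHelpers
lemma ipBias_sq_le (n : ℕ) (k₁ k₂ : ℝ) (X Y : FDist (Fin n → ZMod 2))
    (hX : X.minEntropyGe k₁) (hY : Y.minEntropyGe k₂) :
    (ipBias n X Y) ^ 2 ≤ (2:ℝ)^(-k₁) * ((2:ℝ)^(n:ℕ) * (2:ℝ)^(-k₂)) := by
  classical
  set S : (Fin n → ZMod 2) → ℝ := fun x => ∑ y, Y.pmf y * ch (∑ i, x i * y i) with hSdef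
  have hBS : ipBias n X Y = ∑ x, X.pmf x * S x := by
    unfold ipBias
    refine Finset.sum_congr rfl fun x _ => ?_
    rw [hSdef, Finset.mul_sum]
    exact Finset.sum_congr rfl fun y _ => by ring
  have hCS : (ipBias n X Y) ^ 2 ≤ ∑ x, X.pmf x * S x ^ 2 := by
    have h := Finset.sum_mul_sq_le_sq_mul_sq Finset.univ
      (fun x => Real.sqrt (X.pmf x)) (fun x => Real.sqrt (X.pmf x) * S x)
    have e1 : ∀ x : Fin n → ZMod 2,
        Real.sqrt (X.pmf x) * (Real.sqrt (X.pmf x) * S x) = X.pmf x * S x := by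
      intro x; rw [← mul_assoc, Real.mul_self_sqrt (X.nonneg x)]
    have e2 : ∀ x : Fin n → ZMod 2, Real.sqrt (X.pmf x) ^ 2 = X.pmf x :=
      fun x => Real.sq_sqrt (X.nonneg x)
    have e3 : ∀ x : Fin n → ZMod 2,
        (Real.sqrt (X.pmf x) * S x) ^ 2 = X.pmf x * S x ^ 2 := by
      intro x; rw [mul_pow, e2]
    simp_rw [e1, e2, e3] at h
    rwa [X.sum_one, one_mul, ← hBS] at h
  have h1 : ∑ x, X.pmf x * S x ^ 2 ≤ (2:ℝ)^(-k₁) * ∑ x, S x ^ 2 := by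
    rw [Finset.mul_sum]
    exact Finset.sum_le_sum fun x _ => mul_le_mul_of_nonneg_right (hX x) (sq_nonneg _)
  have h2 : ∑ x, S x ^ 2 = (2:ℝ)^(n:ℕ) * ∑ y, Y.pmf y ^ 2 := by
    have expand : ∀ x : Fin n → ZMod 2, S x ^ 2 =
        ∑ y, ∑ y', (Y.pmf y * Y.pmf y') * ch (∑ i, x i * (y + y') i) := by
      intro x
      rw [hSdef, sq, Finset.sum_mul_sum]
      refine Finset.sum_congr rfl fun y _ => Finset.sum_congr rfl fun y' _ => ?_
      have hz : (∑ i, x i * (y + y') i) = (∑ i, x i * y i) + (∑ i, x i * y' i) := by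
        rw [← Finset.sum_add_distrib]
        refine Finset.sum_congr rfl fun i _ => ?_
        simp only [Pi.add_apply]; ring
      rw [hz, ch_add]; ring
    calc ∑ x, S x ^ 2
        = ∑ y : Fin n → ZMod 2, ∑ y' : Fin n → ZMod 2, (Y.pmf y * Y.pmf y') *
            ∑ x : Fin n → ZMod 2, ch (∑ i, x i * (y + y') i) := by
          simp_rw [expand]
          rw [Finset.sum_comm]
          refine Finset.sum_congr rfl fun y _ => ?_
          rw [Finset.sum_comm]
          refine Finset.sum_congr rfl fun y' _ => ?_
          exact (Finset.mul_sum _ _ _).symm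
      _ = ∑ y : Fin n → ZMod 2, ∑ y' : Fin n → ZMod 2,
            (Y.pmf y * Y.pmf y') * (if y' = y then (2:ℝ)^n else 0) := by
          simp_rw [sum_ch_ip, pi_add_eq_zero]
      _ = (2:ℝ)^(n:ℕ) * ∑ y, Y.pmf y ^ 2 := by
          rw [Finset.mul_sum]
          refine Finset.sum_congr rfl fun y _ => ?_
          simp only [mul_ite, mul_zero]
          rw [Finset.sum_ite_eq' Finset.univ y]
          simp only [Finset.mem_univ, if_true]
          ring
  have h3 : ∑ y, Y.pmf y ^ 2 ≤ (2:ℝ)^(-k₂) := by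
    calc ∑ y, Y.pmf y ^ 2 ≤ ∑ y, (2:ℝ)^(-k₂) * Y.pmf y := by
          refine Finset.sum_le_sum fun y _ => ?_
          rw [sq]
          exact mul_le_mul_of_nonneg_right (hY y) (Y.nonneg y)
      _ = (2:ℝ)^(-k₂) := by rw [← Finset.mul_sum, Y.sum_one, mul_one]
  have hp1 : (0:ℝ) ≤ (2:ℝ)^(-k₁) := (Real.rpow_pos_of_pos (by norm_num) _).le
  have hp2 : (0:ℝ) ≤ (2:ℝ)^(n:ℕ) := by positivity
  calc (ipBias n X Y) ^ 2 ≤ ∑ x, X.pmf x * S x ^ 2 := hCS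
    _ ≤ (2:ℝ)^(-k₁) * ∑ x, S x ^ 2 := h1
    _ = (2:ℝ)^(-k₁) * ((2:ℝ)^(n:ℕ) * ∑ y, Y.pmf y ^ 2) := by rw [h2]
    _ ≤ (2:ℝ)^(-k₁) * ((2:ℝ)^(n:ℕ) * (2:ℝ)^(-k₂)) :=
        mul_le_mul_of_nonneg_left (mul_le_mul_of_nonneg_left h3 hp2) hp1

theorem stmt19 (n : ℕ) (k₁ k₂ ε : ℝ) (hε : 0 < ε)
    (X Y : FDist (Fin n → ZMod 2))
    (hX : X.minEntropyGe k₁) (hY : Y.minEntropyGe k₂)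
    (hk : (n : ℝ) + 2 + 2 * Real.logb 2 (1/ε) ≤ k₁ + k₂) :
    FDist.sd (FDist.map (fun p => ∑ i, p.1 i * p.2 i) (X.prod Y))
      (FDist.uniform (ZMod 2)) ≤ ε := by
  rw [sd_eq_bias n X Y]
  have hBsq := ipBias_sq_le n k₁ k₂ X Y hX hY
  have hpow : (2:ℝ)^(-k₁) * ((2:ℝ)^(n:ℕ) * (2:ℝ)^(-k₂)) = (2:ℝ) ^ ((n:ℝ) - k₁ - k₂) := by
    rw [← Real.rpow_natCast 2 n, ← Real.rpow_add (by norm_num : (0:ℝ) < 2),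
      ← Real.rpow_add (by norm_num : (0:ℝ) < 2)]
    congr 1
    ring
  have hexp : (n:ℝ) - k₁ - k₂ ≤ Real.logb 2 (ε^2/4) := by
    have hlog4 : Real.logb 2 (ε^2/4) = 2 * Real.logb 2 ε - 2 := by
      rw [Real.logb_div (by positivity) (by norm_num), Real.logb_pow,
        show ((4:ℝ)) = 2^(2:ℕ) by norm_num, Real.logb_pow,
        Real.logb_self_eq_one (by norm_num)]
      norm_num
    have hinv : Real.logb 2 (1/ε) = - Real.logb 2 ε := by
      rw [one_div, Real.logb_inv]
    linarith
  have hfin : (2:ℝ) ^ ((n:ℝ) - k₁ - k₂) ≤ ε^2/4 := by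
    have h := Real.rpow_le_rpow_of_exponent_le (by norm_num : (1:ℝ) ≤ 2) hexp
    rwa [Real.rpow_logb (by norm_num) (by norm_num) (by positivity)] at h
  have hBsq' : (ipBias n X Y) ^ 2 ≤ (ε/2)^2 := by
    rw [hpow] at hBsq
    calc (ipBias n X Y) ^ 2 ≤ ε^2/4 := le_trans hBsq hfin
      _ = (ε/2)^2 := by ring
  have hBle : |ipBias n X Y| ≤ ε/2 := by
    have h := Real.sqrt_le_sqrt hBsq'
    rwa [Real.sqrt_sq_eq_abs, Real.sqrt_sq (by positivity : (0:ℝ) ≤ ε/2)] at h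
  linarith [abs_nonneg (ipBias n X Y)]
end
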